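/- Let C_q[SL_2] be the algebra with generators x_{11},x_{12},x_{21},x_{22} and relations x_{11}x_{12}=q x_{12}x_{11}, x_{11}x_{21}=q x_{21}x_{11}, x_{12}x_{22}=q x_{22}x_{12}, x_{21}x_{22}=q x_{22}x_{21}, x_{12}x_{21}=x_{21}x_{12}, x_{11}x_{22}−x_{22}x_{11}=(q−q^{-1})x_{12}x_{21}, x_{11}x_{22}−q x_{12}x_{21}=1. Then for parameters γ,η in C* with γη ≠ −q^{2k+1} for all integers k, the assignments x_{11} e_i = (1+γη q^{2i−1}) e_{i−1}, x_{22} e_i = e_{i+1}, x_{12} e_i = η q^i e_i, x_{21} e_i = γ q^i e_i on the vector space with basis {e_i : i in Z} define a C_q[SL_2]-module structure. -/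

import Mathlib

/-- `x₁₁ eᵢ = (1 + γη q^{2i−1}) e_{i−1}` on the space with basis `{eᵢ : i ∈ ℤ}`. -/
noncomputable def X11 (q γ η : ℂ) : Module.End ℂ (ℤ →₀ ℂ) :=
  Finsupp.lsum ℂ fun i : ℤ => (1 + γ * η * q ^ (2 * i - 1)) • Finsupp.lsingle (i - 1)

/-- `x₂₂ eᵢ = e_{i+1}`. -/
noncomputable def X22 : Module.End ℂ (ℤ →₀ ℂ) :=
  Finsupp.lsum ℂ fun i : ℤ => Finsupp.lsingle (i + 1)

/-- `x₁₂ eᵢ = η qⁱ eᵢ`. -/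
noncomputable def X12 (q η : ℂ) : Module.End ℂ (ℤ →₀ ℂ) :=
  Finsupp.lsum ℂ fun i : ℤ => (η * q ^ i) • Finsupp.lsingle i

/-- `x₂₁ eᵢ = γ qⁱ eᵢ`. -/
noncomputable def X21 (q γ : ℂ) : Module.End ℂ (ℤ →₀ ℂ) :=
  Finsupp.lsum ℂ fun i : ℤ => (γ * q ^ i) • Finsupp.lsingle i

/-- For `γ, η ∈ ℂ*` with `γη ≠ −q^{2k+1}` for all integers `k`, the Laurent-type
assignments define a `ℂ_q[SL₂]`-module structure on `⊕_{i∈ℤ} ℂ eᵢ`: the four operators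
satisfy all seven defining relations of `ℂ_q[SL₂]`. -/
theorem stmt6 (q γ η : ℂ) (hq0 : q ≠ 0) (hq : ∀ r : ℕ, 0 < r → q ^ r ≠ 1)
    (hγ : γ ≠ 0) (hη : η ≠ 0) (hγη : ∀ k : ℤ, γ * η ≠ -q ^ (2 * k + 1)) :
    X11 q γ η * X12 q η = q • (X12 q η * X11 q γ η) ∧
    X11 q γ η * X21 q γ = q • (X21 q γ * X11 q γ η) ∧
    X12 q η * X22 = q • (X22 * X12 q η) ∧
    X21 q γ * X22 = q • (X22 * X21 q γ) ∧
    X12 q η * X21 q γ = X21 q γ * X12 q η ∧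
    X11 q γ η * X22 - X22 * X11 q γ η = (q - q⁻¹) • (X12 q η * X21 q γ) ∧
    X11 q γ η * X22 - q • (X12 q η * X21 q γ) = 1 := by
  refine ⟨?_, ?_, ?_, ?_, ?_, ?_, ?_⟩ <;>
  · refine Finsupp.lhom_ext fun i b => ?_
    simp only [X11, X12, X21, X22, Module.End.mul_apply, LinearMap.sub_apply,
      Module.End.one_apply, Finsupp.lsum_single, LinearMap.smul_apply,
      Finsupp.lsingle_apply, Finsupp.smul_single, map_smul, smul_smul, smul_eq_mul,
      add_sub_cancel_right, sub_add_cancel, ← Finsupp.single_sub, ← sub_mul]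
    congr 1
    try simp only [zpow_sub₀ hq0, zpow_add₀ hq0, zpow_mul', zpow_ofNat, zpow_one]
    try field_simp
    try ring
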